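/- arXiv:2006.08090 — 3 statements merged into one kernel-verified Lean document; each statement's English description precedes it below -/
import Mathlib

section
/- Fix σ ∈ Γ, let ρ_σ be the 1-dimensional nucleus with ρ_σ(0) = |Z_σ⟩⟨Z_σ| and ρ_σ(x) = 0 for x ≠ 0, and let ρ^{(0)} = ρ_σ, ρ^{(n+1)} = 𝔍_n ρ^{(n)} for n ≥ 0. Then ρ_σ is regular: for every t ∈ ℝ, lim_{n→∞} ∑_{x ∈ ℤ} e^{i t x/√n} · Tr[ρ^{(n)}(x)] = e^{−t²/2}. -/
/- Common setup: quantum Bernoulli noises on `ℋ = ℓ²(Γ)`, `Γ` = finite subsets of `ℕ`. -/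

noncomputable section

open ContinuousLinearMap Filter

/-- The space `ℋ = ℓ²(Γ)` of square-integrable Bernoulli functionals,
where `Γ` is the set of finite subsets of `ℕ`. -/
abbrev ℋ : Type := lp (fun _ : Finset ℕ => ℂ) 2

/-- The canonical orthonormal basis `{Z_σ : σ ∈ Γ}` of `ℋ`. -/
def Z (σ : Finset ℕ) : ℋ := lp.single 2 σ 1

/-- `QBN a` says that `a k` is the annihilation operator `∂_k` acting on Bernoulli
functionals: `∂_k Z_σ = 1_σ(k) Z_{σ\k}` and `∂_k* Z_σ = (1 - 1_σ(k)) Z_{σ∪k}`. -/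
def QBN (a : ℕ → ℋ →L[ℂ] ℋ) : Prop :=
  (∀ (k : ℕ) (σ : Finset ℕ), a k (Z σ) = if k ∈ σ then Z (σ.erase k) else 0) ∧
  (∀ (k : ℕ) (σ : Finset ℕ), adjoint (a k) (Z σ) = if k ∈ σ then 0 else Z (insert k σ))

/-- `L_n = (∂_n* + ∂_n - I)/2`. -/
def Lop (a : ℕ → ℋ →L[ℂ] ℋ) (n : ℕ) : ℋ →L[ℂ] ℋ := (2 : ℂ)⁻¹ • (adjoint (a n) + a n - 1)

/-- `R_n = (∂_n* + ∂_n + I)/2`. -/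
def Rop (a : ℕ → ℋ →L[ℂ] ℋ) (n : ℕ) : ℋ →L[ℂ] ℋ := (2 : ℂ)⁻¹ • (adjoint (a n) + a n + 1)

/-- `Λ = {-1, 1} ⊆ ℤ`. -/
def Lam : Finset ℤ := {-1, 1}

/-- `Λ^d`, as a finite set of vectors in `ℤ^d`. -/
def LamD (d : ℕ) : Finset (Fin d → ℤ) := Fintype.piFinset fun _ => Lam

/-- `B_n^{(ε)}`: equals `L_n` if `ε = -1` and `R_n` if `ε = +1`. -/
def Bop (a : ℕ → ℋ →L[ℂ] ℋ) (n : ℕ) (e : ℤ) : ℋ →L[ℂ] ℋ :=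
  if e = -1 then Lop a n else Rop a n

/-- A characterization of the `d`-fold Hilbert-space tensor power of `Hs`:
`tpv` is the multilinear map `(u_1, …, u_d) ↦ u_1 ⊗ ⋯ ⊗ u_d`, which satisfies
`⟪⊗u_j, ⊗v_j⟫ = ∏ ⟪u_j, v_j⟫` and has dense span, and `tp` sends a `d`-tuple of bounded
operators to their tensor product operator, i.e. `(⊗A_j)(⊗u_j) = ⊗(A_j u_j)`. -/
def IsTensorD {Hs : Type} [NormedAddCommGroup Hs] [InnerProductSpace ℂ Hs]
    {d : ℕ} {Hd : Type} [NormedAddCommGroup Hd] [InnerProductSpace ℂ Hd]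
    (tpv : MultilinearMap ℂ (fun _ : Fin d => Hs) Hd)
    (tp : (Fin d → Hs →L[ℂ] Hs) → (Hd →L[ℂ] Hd)) : Prop :=
  (∀ u v : Fin d → Hs, (@inner ℂ _ _ (tpv u) (tpv v)) = ∏ j, (@inner ℂ _ _ (u j) (v j))) ∧
  ((Submodule.span ℂ (Set.range fun u => tpv u)).topologicalClosure = ⊤) ∧
  (∀ (A : Fin d → Hs →L[ℂ] Hs) (u : Fin d → Hs), tp A (tpv u) = tpv fun j => A j (u j))

/-- Conjugation of an operator by a unitary isomorphism `K`: `T ↦ K T K⁻¹`. -/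
def conjK {Hs Hd : Type} [NormedAddCommGroup Hs] [InnerProductSpace ℂ Hs]
    [NormedAddCommGroup Hd] [InnerProductSpace ℂ Hd]
    (K : Hd ≃ₗᵢ[ℂ] Hs) (T : Hd →L[ℂ] Hd) : Hs →L[ℂ] Hs :=
  K.toLinearIsometry.toContinuousLinearMap ∘L T ∘L K.symm.toLinearIsometry.toContinuousLinearMap

/-- `C_n^{(ε)} = K (B_n^{(ε_1)} ⊗ ⋯ ⊗ B_n^{(ε_d)}) K⁻¹` for `ε ∈ Λ^d`. -/
def Cop {d : ℕ} {Hd : Type} [NormedAddCommGroup Hd] [InnerProductSpace ℂ Hd]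
    (a : ℕ → ℋ →L[ℂ] ℋ) (tp : (Fin d → ℋ →L[ℂ] ℋ) → (Hd →L[ℂ] Hd))
    (K : Hd ≃ₗᵢ[ℂ] ℋ) (n : ℕ) (v : Fin d → ℤ) : ℋ →L[ℂ] ℋ :=
  conjK K (tp fun j => Bop a n (v j))

/-- The trace of an operator computed relative to an orthonormal basis `b`:
`Tr T = ∑_i Re ⟪b i, T (b i)⟫` (for positive operators this is the genuine trace). -/
def trB {E : Type} [NormedAddCommGroup E] [InnerProductSpace ℂ E] {ι : Type}
    (b : ι → E) (T : E →L[ℂ] E) : ℝ :=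
  ∑' i, (@inner ℂ _ _ (b i) (T (b i))).re

/-- Finiteness (summability) of the trace of `T` relative to the orthonormal basis `b`;
for a positive operator `T` this says exactly that `T` is of trace class. -/
def HasFiniteTrace {E : Type} [NormedAddCommGroup E] [InnerProductSpace ℂ E] {ι : Type}
    (b : ι → E) (T : E →L[ℂ] E) : Prop :=
  Summable fun i => (@inner ℂ _ _ (b i) (T (b i))).re

/-- The trace on `ℋ`, computed in the canonical ONB `{Z_σ}`. -/
def trH : (ℋ →L[ℂ] ℋ) → ℝ := trB Z

/-- A nucleus with site space `X` on a Hilbert space with orthonormal basis `b`: a family of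
positive trace-class operators `ω x` with `∑_x Tr[ω x] = 1`. -/
def IsNucleusOn {E : Type} [NormedAddCommGroup E] [InnerProductSpace ℂ E] [CompleteSpace E]
    {ι X : Type} (b : ι → E) (ω : X → E →L[ℂ] E) : Prop :=
  (∀ x, (ω x).IsPositive) ∧ (∀ x, HasFiniteTrace b (ω x)) ∧ HasSum (fun x => trB b (ω x)) 1

/-- The one-dimensional map `𝔍_n`: `(𝔍_n ρ)(x) = L_n ρ(x+1) L_n + R_n ρ(x-1) R_n`. -/
def Jmap1 (a : ℕ → ℋ →L[ℂ] ℋ) (n : ℕ) (ρ : ℤ → ℋ →L[ℂ] ℋ) : ℤ → ℋ →L[ℂ] ℋ :=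
  fun x => Lop a n * ρ (x + 1) * Lop a n + Rop a n * ρ (x - 1) * Rop a n

/-- The `d`-dimensional map `𝔍_n^{(d)}`:
`(𝔍_n^{(d)} ω)(x) = ∑_{ε ∈ Λ^d} C_n^{(ε)} ω(x-ε) C_n^{(ε)}`. -/
def JmapD {d : ℕ} {Hd : Type} [NormedAddCommGroup Hd] [InnerProductSpace ℂ Hd]
    (a : ℕ → ℋ →L[ℂ] ℋ) (tp : (Fin d → ℋ →L[ℂ] ℋ) → (Hd →L[ℂ] Hd)) (K : Hd ≃ₗᵢ[ℂ] ℋ)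
    (n : ℕ) (ω : (Fin d → ℤ) → ℋ →L[ℂ] ℋ) : (Fin d → ℤ) → ℋ →L[ℂ] ℋ :=
  fun x => ∑ v ∈ LamD d, Cop a tp K n v * ω (x - v) * Cop a tp K n v

/-- The sequence `ρ⁽⁰⁾ = ρ`, `ρ⁽ⁿ⁺¹⁾ = 𝔍_n ρ⁽ⁿ⁾` generated by `ρ` and `(𝔍_n)`. -/
def seqJ (a : ℕ → ℋ →L[ℂ] ℋ) (ρ : ℤ → ℋ →L[ℂ] ℋ) : ℕ → ℤ → ℋ →L[ℂ] ℋ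
  | 0 => ρ
  | n + 1 => Jmap1 a n (seqJ a ρ n)

/-- Regularity of a 1-dimensional nucleus `ρ`:
`lim_n ∑_x e^{itx/√n} Tr[ρ⁽ⁿ⁾(x)] = e^{-t²/2}` for every real `t`. -/
def Regular (a : ℕ → ℋ →L[ℂ] ℋ) (ρ : ℤ → ℋ →L[ℂ] ℋ) : Prop :=
  ∀ t : ℝ, Tendsto (fun n : ℕ => ∑' x : ℤ,
      Complex.exp (Complex.I * (t : ℂ) * (x : ℂ) / (Real.sqrt n : ℂ)) * (trH (seqJ a ρ n x) : ℂ))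
    atTop (nhds (Complex.exp (-(t : ℂ) ^ 2 / 2)))

/-- The rank-one (Dirac) operator `|u⟩⟨v| : w ↦ ⟪v, w⟫ u`. -/
def dyad {E : Type} [NormedAddCommGroup E] [InnerProductSpace ℂ E] (u v : E) : E →L[ℂ] E :=
  (toSpanSingleton ℂ u).comp (innerSL ℂ v)

/-- `ℓ²(ℤ^d)`. -/
abbrev l2Z (d : ℕ) : Type := lp (fun _ : Fin d → ℤ => ℂ) 2

/-- The canonical orthonormal basis `{δ_x : x ∈ ℤ^d}` of `ℓ²(ℤ^d)`. -/
def deltaV {d : ℕ} (x : Fin d → ℤ) : l2Z d := lp.single 2 x 1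

/-- A characterization of the Hilbert-space tensor product `E = ℓ²(ℤ^d) ⊗ Hs`:
`tv` is the bilinear map `(f, u) ↦ f ⊗ u`, with `⟪f⊗u, g⊗v⟫ = ⟪f,g⟫⟪u,v⟫` and dense span,
and `top2` sends a pair of bounded operators to their tensor product operator:
`(A ⊗ B)(f ⊗ u) = (A f) ⊗ (B u)`. -/
def IsTensor2 {d : ℕ} {Hs E : Type} [NormedAddCommGroup Hs] [InnerProductSpace ℂ Hs]
    [NormedAddCommGroup E] [InnerProductSpace ℂ E]
    (tv : l2Z d →ₗ[ℂ] Hs →ₗ[ℂ] E)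
    (top2 : (l2Z d →L[ℂ] l2Z d) → (Hs →L[ℂ] Hs) → (E →L[ℂ] E)) : Prop :=
  (∀ (f g : l2Z d) (u v : Hs),
      (@inner ℂ _ _ (tv f u) (tv g v)) = (@inner ℂ _ _ f g) * (@inner ℂ _ _ u v)) ∧
  ((Submodule.span ℂ {z : E | ∃ f u, z = tv f u}).topologicalClosure = ⊤) ∧
  (∀ (A : l2Z d →L[ℂ] l2Z d) (B : Hs →L[ℂ] Hs) (f : l2Z d) (u : Hs),
      top2 A B (tv f u) = tv (A f) (B u))

/-- The orthonormal basis `{δ_x ⊗ b_κ}` of the tensor product `ℓ²(ℤ^d) ⊗ Hs` induced by the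
canonical basis of `ℓ²(ℤ^d)` and an orthonormal basis `b` of `Hs`. -/
def tbasis {d : ℕ} {Hs E : Type} [NormedAddCommGroup Hs] [InnerProductSpace ℂ Hs]
    [NormedAddCommGroup E] [InnerProductSpace ℂ E]
    (tv : l2Z d →ₗ[ℂ] Hs →ₗ[ℂ] E) {κ : Type} (b : κ → Hs) : (Fin d → ℤ) × κ → E :=
  fun p => tv (deltaV p.1) (b p.2)

/-- The Kraus operators `M^{(n)}_{x,y} = |δ_x⟩⟨δ_y| ⊗ C_n^{(x-y)}` if `x - y ∈ Λ^d`, else `0`. -/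
def Mop {d : ℕ} {Hd E : Type} [NormedAddCommGroup Hd] [InnerProductSpace ℂ Hd]
    [NormedAddCommGroup E] [InnerProductSpace ℂ E]
    (a : ℕ → ℋ →L[ℂ] ℋ) (tp : (Fin d → ℋ →L[ℂ] ℋ) → (Hd →L[ℂ] Hd)) (K : Hd ≃ₗᵢ[ℂ] ℋ)
    (top2 : (l2Z d →L[ℂ] l2Z d) → (ℋ →L[ℂ] ℋ) → (E →L[ℂ] E))
    (n : ℕ) (x y : Fin d → ℤ) : E →L[ℂ] E :=
  if x - y ∈ LamD d then top2 (dyad (deltaV x) (deltaV y)) (Cop a tp K n (x - y)) else 0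


/-- The 1-dimensional nucleus `ρ_σ` concentrated at `0` with value `|Z_σ⟩⟨Z_σ|`. -/
def rhoPoint (σ : Finset ℕ) : ℤ → ℋ →L[ℂ] ℋ := fun x => if x = 0 then dyad (Z σ) (Z σ) else 0

/-- `ℓ²(ℤ^d; ℋ)`, the space of square-summable `ℋ`-valued functions on `ℤ^d`. -/
abbrev l2ZH (d : ℕ) : Type := lp (fun _ : Fin d → ℤ => ℋ) 2

-- auxiliary development

lemma inner_Z_Z (γ δ : Finset ℕ) : (@inner ℂ _ _ (Z γ) (Z δ)) = if γ = δ then 1 else 0 := by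
  rw [Z, Z, lp.inner_single_left]
  by_cases h : γ = δ
  · subst h; simp [lp.single_apply]
  · simp [lp.single_apply, Ne.symm h, h]

/-- the symmetric-difference-with-{n} operation -/
def flp (n : ℕ) (γ : Finset ℕ) : Finset ℕ := if n ∈ γ then γ.erase n else insert n γ

def sop (a : ℕ → ℋ →L[ℂ] ℋ) (n : ℕ) : ℋ →L[ℂ] ℋ := adjoint (a n) + a n

lemma sZ {a : ℕ → ℋ →L[ℂ] ℋ} (ha : QBN a) (n : ℕ) (γ : Finset ℕ) :
    sop a n (Z γ) = Z (flp n γ) := by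
  rw [sop, add_apply, ha.1, ha.2, flp]
  by_cases h : n ∈ γ <;> simp [h]

lemma flp_flp (n : ℕ) (γ : Finset ℕ) : flp n (flp n γ) = γ := by
  rw [flp, flp]
  by_cases h : n ∈ γ
  · simp [h, Finset.insert_erase h]
  · simp [h, Finset.erase_insert h]

lemma mem_flp (n : ℕ) (γ : Finset ℕ) : n ∈ flp n γ ↔ ¬ n ∈ γ := by
  rw [flp]; by_cases h : n ∈ γ <;> simp [h]

lemma inner_sop (a : ℕ → ℋ →L[ℂ] ℋ) (n : ℕ) (u v : ℋ) :
    (@inner ℂ _ _ (sop a n u) v) = @inner ℂ _ _ u (sop a n v) := by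
  rw [sop, add_apply, add_apply, inner_add_left, inner_add_right,
    adjoint_inner_left, adjoint_inner_right]
  ring

/-- sets agreeing with σ above n -/
def GoodA (σ : Finset ℕ) (n : ℕ) (γ : Finset ℕ) : Prop := ∀ k, n ≤ k → (k ∈ γ ↔ k ∈ σ)

def SpanN (σ : Finset ℕ) (n : ℕ) : Submodule ℂ ℋ :=
  Submodule.span ℂ (Z '' {γ | GoodA σ n γ})

lemma Zσ_mem (σ : Finset ℕ) : Z σ ∈ SpanN σ 0 :=
  Submodule.subset_span ⟨σ, fun _ _ => Iff.rfl, rfl⟩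

lemma good_flp {σ : Finset ℕ} {n γ} (h : GoodA σ n γ) : GoodA σ (n+1) (flp n γ) := by
  intro k hk
  have hkn : k ≠ n := by omega
  rw [flp]
  by_cases hn : n ∈ γ <;> simp [hn, hkn, Finset.mem_erase, Finset.mem_insert, h k (by omega)]

lemma good_succ {σ : Finset ℕ} {n γ} (h : GoodA σ n γ) : GoodA σ (n+1) γ :=
  fun k hk => h k (by omega)

lemma sop_mem {a : ℕ → ℋ →L[ℂ] ℋ} (ha : QBN a) {σ : Finset ℕ} {n : ℕ} {u : ℋ}
    (hu : u ∈ SpanN σ n) : sop a n u ∈ SpanN σ (n+1) := by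
  have : SpanN σ n ≤ (SpanN σ (n+1)).comap (sop a n : ℋ →ₗ[ℂ] ℋ) := by
    rw [SpanN, Submodule.span_le]
    rintro _ ⟨γ, hγ, rfl⟩
    have : (sop a n : ℋ →ₗ[ℂ] ℋ) (Z γ) = Z (flp n γ) := sZ ha n γ
    rw [SetLike.mem_coe, Submodule.mem_comap, this]
    exact Submodule.subset_span ⟨flp n γ, good_flp hγ, rfl⟩
  exact this hu

lemma mem_succ {σ : Finset ℕ} {n : ℕ} {u : ℋ} (hu : u ∈ SpanN σ n) : u ∈ SpanN σ (n+1) := by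
  have : SpanN σ n ≤ SpanN σ (n+1) := by
    rw [SpanN, Submodule.span_le]
    rintro _ ⟨γ, hγ, rfl⟩
    exact Submodule.subset_span ⟨γ, good_succ hγ, rfl⟩
  exact this hu

lemma Bop_mem {a : ℕ → ℋ →L[ℂ] ℋ} (ha : QBN a) {σ : Finset ℕ} {n : ℕ} (e : ℤ) {u : ℋ}
    (hu : u ∈ SpanN σ n) : Bop a n e u ∈ SpanN σ (n+1) := by
  rw [Bop]
  split
  · rw [Lop]
    simp only [smul_apply, sub_apply, one_apply]
    exact Submodule.smul_mem _ _ (Submodule.sub_mem _ (sop_mem ha hu) (mem_succ hu))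
  · rw [Rop]
    simp only [smul_apply, add_apply, one_apply]
    exact Submodule.smul_mem _ _ (Submodule.add_mem _ (sop_mem ha hu) (mem_succ hu))

lemma inner_sop_zero {a : ℕ → ℋ →L[ℂ] ℋ} (ha : QBN a) {σ : Finset ℕ} {n : ℕ} {u v : ℋ}
    (hu : u ∈ SpanN σ n) (hv : v ∈ SpanN σ n) : (@inner ℂ _ _ u (sop a n v)) = 0 := by
  induction hv using Submodule.span_induction with
  | mem x hx =>
    obtain ⟨δ, hδ, rfl⟩ := hx
    rw [sZ ha]
    induction hu using Submodule.span_induction with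
    | mem y hy =>
      obtain ⟨γ, hγ, rfl⟩ := hy
      rw [inner_Z_Z, if_neg]
      intro hEq
      have h1 : n ∈ γ ↔ n ∈ σ := hγ n le_rfl
      have h2 : n ∈ δ ↔ n ∈ σ := hδ n le_rfl
      have := mem_flp n δ
      rw [← hEq] at this
      tauto
    | zero => simp
    | add y z _ _ h1 h2 => rw [inner_add_left, h1, h2, add_zero]
    | smul c y _ h1 => rw [inner_smul_left, h1, mul_zero]
  | zero => simp
  | add x y _ _ h1 h2 => rw [map_add, inner_add_right, h1, h2, add_zero]
  | smul c x _ h1 => rw [map_smul, inner_smul_right, h1, mul_zero]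

lemma sop_sop {a : ℕ → ℋ →L[ℂ] ℋ} (ha : QBN a) {σ : Finset ℕ} {n : ℕ} {u : ℋ}
    (hu : u ∈ SpanN σ n) : sop a n (sop a n u) = u := by
  induction hu using Submodule.span_induction with
  | mem x hx =>
    obtain ⟨γ, _, rfl⟩ := hx
    rw [sZ ha, sZ ha, flp_flp]
  | zero => simp
  | add x y _ _ h1 h2 => rw [map_add, map_add, h1, h2]
  | smul c x _ h1 => rw [map_smul, map_smul, h1]

lemma Lop_apply (a : ℕ → ℋ →L[ℂ] ℋ) (n : ℕ) (u : ℋ) :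
    Lop a n u = (2:ℂ)⁻¹ • (sop a n u - u) := rfl

lemma Rop_apply (a : ℕ → ℋ →L[ℂ] ℋ) (n : ℕ) (u : ℋ) :
    Rop a n u = (2:ℂ)⁻¹ • (sop a n u + u) := rfl

lemma conj_two_inv : (starRingEnd ℂ) 2⁻¹ = 2⁻¹ := by
  rw [map_inv₀, Complex.conj_ofNat]

lemma inner_Bop {a : ℕ → ℋ →L[ℂ] ℋ} (ha : QBN a) {σ : Finset ℕ} {n : ℕ} (e : ℤ) {u : ℋ}
    (hu : u ∈ SpanN σ n) :
    (@inner ℂ _ _ (Bop a n e u) (Bop a n e u)) = (2:ℂ)⁻¹ * @inner ℂ _ _ u u := by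
  have hsu : (@inner ℂ _ _ (sop a n u) (sop a n u)) = @inner ℂ _ _ u u := by
    rw [inner_sop, sop_sop ha hu]
  have h1 : (@inner ℂ _ _ u (sop a n u)) = 0 := inner_sop_zero ha hu hu
  have h2 : (@inner ℂ _ _ (sop a n u) u) = 0 := by
    rw [inner_sop]; exact inner_sop_zero ha hu hu
  rw [Bop]
  split
  · rw [Lop_apply, inner_smul_left, inner_smul_right, inner_sub_left, inner_sub_right,
      inner_sub_right, hsu, h1, h2, conj_two_inv]
    ring
  · rw [Rop_apply, inner_smul_left, inner_smul_right, inner_add_left, inner_add_right,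
      inner_add_right, hsu, h1, h2, conj_two_inv]
    ring

lemma inner_Z_left (γ : Finset ℕ) (u : ℋ) : (@inner ℂ _ _ (Z γ) u) = u γ := by
  rw [Z, lp.inner_single_left]; simp

lemma toReal2 : ENNReal.toReal 2 = 2 := by norm_num

lemma norm_sq_eq_tsum (u : ℋ) : ‖u‖ ^ 2 = ∑' τ, ‖u τ‖ ^ 2 := by
  have := lp.norm_rpow_eq_tsum (p := 2) (by norm_num) u
  rw [toReal2] at this
  rw [← Real.rpow_natCast ‖u‖ 2]
  rw [show ((2:ℕ):ℝ) = (2:ℝ) by norm_num, this]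
  refine tsum_congr fun τ => ?_
  rw [← Real.rpow_natCast ‖u τ‖ 2]; norm_num

lemma summable_sq (u : ℋ) : Summable fun τ => ‖u τ‖ ^ 2 := by
  have := (lp.memℓp u).summable (p := 2) (by norm_num)
  rw [toReal2] at this
  refine this.congr fun τ => ?_
  rw [← Real.rpow_natCast ‖u τ‖ 2]; norm_num


/-- the path vectors -/
def wvec (a : ℕ → ℋ →L[ℂ] ℋ) (σ : Finset ℕ) : (n : ℕ) → (Fin n → ℤ) → ℋ
  | 0, _ => Z σ
  | n+1, ε => Bop a n (ε (Fin.last n)) (wvec a σ n (fun j => ε j.castSucc))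

lemma wvec_mem {a : ℕ → ℋ →L[ℂ] ℋ} (ha : QBN a) (σ : Finset ℕ) :
    ∀ (n : ℕ) (ε : Fin n → ℤ), wvec a σ n ε ∈ SpanN σ n
  | 0, _ => Zσ_mem σ
  | n+1, ε => Bop_mem ha _ (wvec_mem ha σ n _)

lemma wvec_inner {a : ℕ → ℋ →L[ℂ] ℋ} (ha : QBN a) (σ : Finset ℕ) :
    ∀ (n : ℕ) (ε : Fin n → ℤ),
      (@inner ℂ _ _ (wvec a σ n ε) (wvec a σ n ε)) = ((2:ℂ)⁻¹) ^ n
  | 0, _ => by simp only [wvec]; rw [inner_Z_Z, if_pos rfl, pow_zero]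
  | n+1, ε => by
      rw [wvec, inner_Bop ha _ (wvec_mem ha σ n _), wvec_inner ha σ n, pow_succ]
      ring

lemma wvec_norm_sq {a : ℕ → ℋ →L[ℂ] ℋ} (ha : QBN a) (σ : Finset ℕ) (n : ℕ) (ε : Fin n → ℤ) :
    ‖wvec a σ n ε‖ ^ 2 = ((2:ℝ)⁻¹) ^ n := by
  have h := wvec_inner ha σ n ε
  rw [inner_self_eq_norm_sq_to_K] at h
  refine Complex.ofReal_injective ?_
  push_cast
  exact_mod_cast h

lemma inner_Bop_move (a : ℕ → ℋ →L[ℂ] ℋ) (n : ℕ) (e : ℤ) (u v : ℋ) :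
    (@inner ℂ _ _ (Bop a n e u) v) = @inner ℂ _ _ u (Bop a n e v) := by
  rw [Bop]
  split
  · rw [Lop_apply, Lop_apply, inner_smul_left, inner_smul_right, conj_two_inv,
      inner_sub_left, inner_sub_right, inner_sop]
  · rw [Rop_apply, Rop_apply, inner_smul_left, inner_smul_right, conj_two_inv,
      inner_add_left, inner_add_right, inner_sop]

lemma dyad_apply {E : Type} [NormedAddCommGroup E] [InnerProductSpace ℂ E] (u v w : E) :
    dyad u v w = (@inner ℂ _ _ v w) • u := rfl

lemma Bop_dyad (a : ℕ → ℋ →L[ℂ] ℋ) (n : ℕ) (e : ℤ) (u : ℋ) :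
    Bop a n e * dyad u u * Bop a n e = dyad (Bop a n e u) (Bop a n e u) := by
  ext1 v
  show (Bop a n e) (dyad u u ((Bop a n e) v)) = _
  simp only [mul_apply, dyad_apply, map_smul]
  rw [inner_Bop_move]

lemma Bop_neg_one (a : ℕ → ℋ →L[ℂ] ℋ) (n : ℕ) : Bop a n (-1) = Lop a n := if_pos rfl

lemma Bop_one (a : ℕ → ℋ →L[ℂ] ℋ) (n : ℕ) : Bop a n 1 = Rop a n := if_neg (by decide)

lemma Lop_dyad (a : ℕ → ℋ →L[ℂ] ℋ) (n : ℕ) (u : ℋ) :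
    Lop a n * dyad u u * Lop a n = dyad (Lop a n u) (Lop a n u) := by
  have := Bop_dyad a n (-1) u
  rwa [Bop_neg_one] at this

lemma Rop_dyad (a : ℕ → ℋ →L[ℂ] ℋ) (n : ℕ) (u : ℋ) :
    Rop a n * dyad u u * Rop a n = dyad (Rop a n u) (Rop a n u) := by
  have := Bop_dyad a n 1 u
  rwa [Bop_one] at this

lemma LamD_zero : LamD 0 = {fun _ => (0:ℤ)} := by
  ext ε
  simp only [LamD, Fintype.mem_piFinset, Finset.mem_singleton]
  constructor
  · intro _; exact funext fun j => j.elim0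
  · intro _ j; exact j.elim0

lemma sum_Lam {M : Type} [AddCommMonoid M] (F : ℤ → M) : ∑ e ∈ Lam, F e = F (-1) + F 1 := by
  rw [Lam, Finset.sum_insert (by decide), Finset.sum_singleton]

lemma sum_snoc {M : Type} [AddCommMonoid M] (n : ℕ) (F : (Fin (n+1) → ℤ) → M) :
    ∑ ε ∈ LamD (n+1), F ε = ∑ ε ∈ LamD n, ∑ e ∈ Lam, F (Fin.snoc ε e) := by
  rw [← Finset.sum_product']
  refine Finset.sum_nbij' (i := fun ε => ((fun j => ε (Fin.castSucc j), ε (Fin.last n)) : (Fin n → ℤ) × ℤ))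
    (j := fun p => Fin.snoc p.1 p.2) ?_ ?_ ?_ ?_ ?_
  · intro ε hε
    simp only [LamD, Fintype.mem_piFinset] at hε
    simp only [Finset.mem_product, LamD, Fintype.mem_piFinset]
    exact ⟨fun j => hε _, hε _⟩
  · intro p hp
    simp only [Finset.mem_product, LamD, Fintype.mem_piFinset] at hp
    simp only [LamD, Fintype.mem_piFinset]
    intro j
    cases j using Fin.lastCases with
    | last => rw [Fin.snoc_last]; exact hp.2
    | cast j => rw [Fin.snoc_castSucc]; exact hp.1 j
  · intro ε _
    exact Fin.snoc_init_self ε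
  · intro p _
    refine Prod.ext (funext fun j => ?_) ?_
    · simp only [Fin.snoc_castSucc]
    · simp only [Fin.snoc_last]
  · intro ε _
    exact congrArg F (Fin.snoc_init_self ε).symm

/-- the key structural invariant -/
lemma seqJ_eq {a : ℕ → ℋ →L[ℂ] ℋ} (ha : QBN a) (σ : Finset ℕ) (n : ℕ) (x : ℤ) :
    seqJ a (rhoPoint σ) n x =
      ∑ ε ∈ LamD n, if (∑ j, ε j) = x then dyad (wvec a σ n ε) (wvec a σ n ε) else 0 := by
  induction n generalizing x with
  | zero =>
      rw [seqJ, LamD_zero, Finset.sum_singleton, rhoPoint]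
      simp only [Finset.univ_eq_empty, Finset.sum_empty, wvec]
      by_cases h : x = 0
      · subst h; simp
      · simp [h, Ne.symm h]
  | succ n ih =>
      rw [seqJ, Jmap1, ih, ih]
      rw [Finset.mul_sum, Finset.mul_sum, Finset.sum_mul, Finset.sum_mul]
      rw [sum_snoc]
      simp only [sum_Lam]
      rw [Finset.sum_add_distrib]
      congr 1
      · refine Finset.sum_congr rfl fun ε hε => ?_
        rw [mul_ite, ite_mul, mul_zero, zero_mul, Lop_dyad]
        have hsum : (∑ j : Fin (n+1), (Fin.snoc ε (-1:ℤ) : Fin (n+1) → ℤ) j)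
            = (∑ j : Fin n, ε j) + (-1) := by
          rw [Fin.sum_univ_castSucc]
          simp [Fin.snoc_castSucc, Fin.snoc_last]
        rw [hsum]
        have hcond : ((∑ j : Fin n, ε j) + (-1) = x) ↔ ((∑ j : Fin n, ε j) = x + 1) := by omega
        rw [if_congr hcond rfl rfl]
        congr 2 <;>
        · show Lop a n (wvec a σ n ε) = wvec a σ (n+1) (Fin.snoc ε (-1))
          rw [wvec]
          simp only [Fin.snoc_last, Fin.snoc_castSucc, Bop_neg_one]
      · refine Finset.sum_congr rfl fun ε hε => ?_
        rw [mul_ite, ite_mul, mul_zero, zero_mul, Rop_dyad]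
        have hsum : (∑ j : Fin (n+1), (Fin.snoc ε (1:ℤ) : Fin (n+1) → ℤ) j)
            = (∑ j : Fin n, ε j) + 1 := by
          rw [Fin.sum_univ_castSucc]
          simp [Fin.snoc_castSucc, Fin.snoc_last]
        rw [hsum]
        have hcond : ((∑ j : Fin n, ε j) + 1 = x) ↔ ((∑ j : Fin n, ε j) = x - 1) := by omega
        rw [if_congr hcond rfl rfl]
        congr 2 <;>
        · show Rop a n (wvec a σ n ε) = wvec a σ (n+1) (Fin.snoc ε (1:ℤ))
          rw [wvec]
          simp only [Fin.snoc_last, Fin.snoc_castSucc, Bop_one]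


-- analytic limit lemmas

open Real in
lemma sin_div_lim : Tendsto (fun x : ℝ => Real.sin x / x) (nhdsWithin 0 {0}ᶜ) (nhds 1) := by
  have h := (Real.hasDerivAt_sin 0)
  rw [hasDerivAt_iff_tendsto_slope] at h
  rw [Real.cos_zero] at h
  refine h.congr fun x => ?_
  simp [slope_def_field]

private lemma half_map : Tendsto (fun u : ℝ => u / 2) (nhdsWithin 0 {0}ᶜ) (nhdsWithin 0 {0}ᶜ) := by
  rw [tendsto_nhdsWithin_iff]
  constructor
  · have h0 : Tendsto (fun u : ℝ => u / 2) (nhds (0:ℝ)) (nhds ((0:ℝ)/2)) :=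
      (continuous_id.div_const 2).tendsto 0
    simpa using h0.mono_left nhdsWithin_le_nhds
  · filter_upwards [self_mem_nhdsWithin] with u hu
    simp only [Set.mem_compl_iff, Set.mem_singleton_iff] at hu ⊢
    exact div_ne_zero hu two_ne_zero

private lemma cos_sub_one_div_sq :
    Tendsto (fun u : ℝ => (Real.cos u - 1) / u ^ 2) (nhdsWithin 0 {0}ᶜ) (nhds (-(1/2))) := by
  have hs : Tendsto (fun u : ℝ => Real.sin (u/2) / (u/2)) (nhdsWithin 0 {0}ᶜ) (nhds 1) :=
    sin_div_lim.comp half_map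
  have hmain : Tendsto (fun u : ℝ => -((Real.sin (u/2) / (u/2)) ^ 2) / 2)
      (nhdsWithin 0 {0}ᶜ) (nhds (-(1/2))) := by
    have h1 : Tendsto (fun u : ℝ => (Real.sin (u/2) / (u/2)) ^ 2) (nhdsWithin 0 {0}ᶜ) (nhds 1) := by
      simpa using hs.pow 2
    have h2 := (h1.neg).div_const 2
    convert h2 using 2
    norm_num
  refine hmain.congr' ?_
  filter_upwards [self_mem_nhdsWithin] with u hu
  have hu0 : (u : ℝ) ≠ 0 := hu
  have hid : Real.cos u - 1 = -(2 * Real.sin (u/2) ^ 2) := by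
    have h := Real.sin_sq_eq_half_sub (u/2)
    have h2 : 2 * (u/2) = u := by ring
    rw [h2] at h
    linarith
  rw [div_pow, hid]
  field_simp

private lemma log_one_add_div : Tendsto (fun y : ℝ => Real.log (1 + y) / y)
    (nhdsWithin 0 {0}ᶜ) (nhds 1) := by
  have h : HasDerivAt (fun y : ℝ => Real.log (1 + y)) 1 0 := by
    have h1 : HasDerivAt (fun y : ℝ => 1 + y) 1 0 := by
      simpa using (hasDerivAt_id (0:ℝ)).const_add 1
    have h2 := (Real.hasDerivAt_log (by norm_num : (1:ℝ) + 0 ≠ 0)).comp 0 h1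
    simpa [Function.comp_def] using h2
  rw [hasDerivAt_iff_tendsto_slope] at h
  refine h.congr fun x => ?_
  simp [slope_def_field]

private lemma cos_ne_one_ev : ∀ᶠ u in nhdsWithin (0:ℝ) {0}ᶜ, Real.cos u - 1 ≠ 0 := by
  have hmem : {u : ℝ | u ∈ Set.Ioo (-1 : ℝ) 1} ∈ nhdsWithin (0:ℝ) {0}ᶜ :=
    nhdsWithin_le_nhds (Ioo_mem_nhds (by norm_num) (by norm_num))
  filter_upwards [hmem, self_mem_nhdsWithin] with u hu hne
  obtain ⟨hl, hr⟩ := hu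
  have hne' : u ≠ 0 := hne
  have hpi : (3:ℝ) < Real.pi := Real.pi_gt_three
  have : Real.cos u ≠ 1 := by
    rw [Ne, Real.cos_eq_one_iff_of_lt_of_lt (by nlinarith) (by nlinarith)]
    exact hne'
  exact sub_ne_zero.mpr this

private lemma log_cos_div_sq :
    Tendsto (fun u : ℝ => Real.log (Real.cos u) / u ^ 2) (nhdsWithin 0 {0}ᶜ)
      (nhds (-(1/2))) := by
  have hc1 : Tendsto (fun u : ℝ => Real.cos u - 1) (nhdsWithin 0 {0}ᶜ)
      (nhdsWithin 0 {0}ᶜ) := by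
    rw [tendsto_nhdsWithin_iff]
    constructor
    · have h0 : Tendsto (fun u : ℝ => Real.cos u - 1) (nhds 0) (nhds (Real.cos 0 - 1)) :=
        (Real.continuous_cos.sub continuous_const).tendsto 0
      simpa using h0.mono_left nhdsWithin_le_nhds
    · filter_upwards [cos_ne_one_ev] with u hu
      simpa using hu
  have hlog : Tendsto (fun u : ℝ => Real.log (1 + (Real.cos u - 1)) / (Real.cos u - 1))
      (nhdsWithin 0 {0}ᶜ) (nhds 1) := log_one_add_div.comp hc1
  have hprod := hlog.mul cos_sub_one_div_sq
  rw [one_mul] at hprod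
  refine hprod.congr' ?_
  filter_upwards [cos_ne_one_ev] with u hu
  have h1 : (1 : ℝ) + (Real.cos u - 1) = Real.cos u := by ring
  rw [h1]
  field_simp

/-- the real limit -/
lemma real_cos_pow_lim (t : ℝ) :
    Tendsto (fun n : ℕ => (Real.cos (t / Real.sqrt n)) ^ n) atTop
      (nhds (Real.exp (-t^2/2))) := by
  rcases eq_or_ne t 0 with rfl | ht
  · simpa using tendsto_const_nhds (α := ℝ) (f := atTop (α := ℕ))
  · have hsR : Tendsto (fun x : ℝ => Real.sqrt x) atTop atTop := by
      refine (tendsto_rpow_atTop (y := (1:ℝ)/2) (by norm_num)).congr' ?_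
      filter_upwards [eventually_ge_atTop (0:ℝ)] with x hx
      rw [Real.sqrt_eq_rpow]
    have hu0 : Tendsto (fun n : ℕ => t / Real.sqrt n) atTop (nhds 0) := by
      have hs : Tendsto (fun n : ℕ => Real.sqrt n) atTop atTop :=
        hsR.comp tendsto_natCast_atTop_atTop
      have h2 := hs.inv_tendsto_atTop.const_mul t
      simpa [div_eq_mul_inv, mul_zero] using h2
    have hu : Tendsto (fun n : ℕ => t / Real.sqrt n) atTop (nhdsWithin 0 {0}ᶜ) := by
      rw [tendsto_nhdsWithin_iff]
      refine ⟨hu0, ?_⟩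
      filter_upwards [eventually_ge_atTop 1] with n hn
      have hnp : (0:ℝ) < n := by exact_mod_cast Nat.lt_of_lt_of_le Nat.zero_lt_one hn
      have hs : (0:ℝ) < Real.sqrt n := Real.sqrt_pos.mpr hnp
      simp only [Set.mem_compl_iff, Set.mem_singleton_iff]
      exact div_ne_zero ht hs.ne'
    have hkey : Tendsto (fun n : ℕ => (n : ℝ) * Real.log (Real.cos (t / Real.sqrt n))) atTop
        (nhds (-t^2/2)) := by
      have hcomp : Tendsto (fun n : ℕ =>
          t^2 * (Real.log (Real.cos (t / Real.sqrt n)) / (t / Real.sqrt n)^2)) atTop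
          (nhds (t^2 * -(1/2))) := (log_cos_div_sq.comp hu).const_mul _
      have heq : ∀ᶠ n : ℕ in atTop, t^2 * (Real.log (Real.cos (t / Real.sqrt n)) / (t / Real.sqrt n)^2)
          = (n : ℝ) * Real.log (Real.cos (t / Real.sqrt n)) := by
        filter_upwards [eventually_ge_atTop 1] with n hn
        have hnp : (0:ℝ) < (n:ℝ) := by exact_mod_cast Nat.lt_of_lt_of_le Nat.zero_lt_one hn
        have hsq : (Real.sqrt n)^2 = (n:ℝ) := Real.sq_sqrt hnp.le
        have hpow : (t / Real.sqrt n)^2 = t^2 / (n:ℝ) := by rw [div_pow, hsq]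
        rw [hpow]
        field_simp
      have h3 := hcomp.congr' heq
      convert h3 using 2
      ring
    have hcospos : ∀ᶠ n : ℕ in atTop, 0 < Real.cos (t / Real.sqrt n) := by
      have hmem : {u : ℝ | u ∈ Set.Ioo (-1 : ℝ) 1} ∈ nhds (0:ℝ) :=
        Ioo_mem_nhds (by norm_num) (by norm_num)
      filter_upwards [mem_map.mp (hu0 hmem)] with n hn
      obtain ⟨hl, hr⟩ := hn
      have hpi : (3:ℝ) < Real.pi := Real.pi_gt_three
      exact Real.cos_pos_of_mem_Ioo ⟨by nlinarith, by nlinarith⟩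
    have hexp := (Real.continuous_exp.tendsto _).comp hkey
    refine hexp.congr' ?_
    filter_upwards [hcospos] with n hn
    simp only [Function.comp_apply]
    rw [← Real.log_pow, Real.exp_log (pow_pos hn n)]


lemma tr_term (u : ℋ) (τ : Finset ℕ) : (@inner ℂ _ _ (Z τ) (dyad u u (Z τ))).re = ‖u τ‖^2 := by
  rw [dyad_apply, inner_smul_right, inner_Z_left, ← inner_conj_symm u (Z τ), inner_Z_left]
  rw [mul_comm, Complex.mul_conj]
  simp only [Complex.normSq_eq_norm_sq]
  exact Complex.ofReal_re _

lemma trH_seqJ {a : ℕ → ℋ →L[ℂ] ℋ} (ha : QBN a) (σ : Finset ℕ) (n : ℕ) (x : ℤ) :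
    trH (seqJ a (rhoPoint σ) n x)
      = ∑ ε ∈ LamD n, (if (∑ j, ε j) = x then ((2:ℝ)⁻¹)^n else 0) := by
  rw [trH, trB, seqJ_eq ha]
  have hterm : ∀ τ : Finset ℕ,
      (@inner ℂ _ _ (Z τ) ((∑ ε ∈ LamD n,
          if (∑ j, ε j) = x then dyad (wvec a σ n ε) (wvec a σ n ε) else 0) (Z τ))).re
      = ∑ ε ∈ LamD n, (if (∑ j, ε j) = x then ‖(wvec a σ n ε : ℋ) τ‖^2 else 0) := by
    intro τ
    rw [ContinuousLinearMap.sum_apply, inner_sum, Complex.re_sum]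
    refine Finset.sum_congr rfl fun ε _ => ?_
    by_cases hc : (∑ j, ε j) = x
    · rw [if_pos hc, if_pos hc, tr_term]
    · rw [if_neg hc, if_neg hc]
      simp
  rw [tsum_congr hterm]
  rw [Summable.tsum_finsetSum (f := fun ε τ => if (∑ j, ε j) = x then ‖(wvec a σ n ε : ℋ) τ‖^2 else 0)
    (fun ε _ => ?_)]
  · refine Finset.sum_congr rfl fun ε _ => ?_
    by_cases hc : (∑ j, ε j) = x
    · rw [if_pos hc]
      simp only [hc, if_true]
      rw [← norm_sq_eq_tsum, wvec_norm_sq ha]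
    · simp [hc]
  · by_cases hc : (∑ j, ε j) = x
    · simpa [hc] using summable_sq (wvec a σ n ε)
    · simp [hc]

lemma char_fun {a : ℕ → ℋ →L[ℂ] ℋ} (ha : QBN a) (σ : Finset ℕ) (t : ℝ) (n : ℕ) :
    (∑' x : ℤ, Complex.exp (Complex.I * (t : ℂ) * (x : ℂ) / (Real.sqrt n : ℂ))
        * ((trH (seqJ a (rhoPoint σ) n x) : ℝ) : ℂ))
      = (Complex.cos ((t : ℂ) / (Real.sqrt n : ℂ)))^n := by
  have h1 : ∀ x : ℤ, Complex.exp (Complex.I * (t:ℂ) * (x:ℂ) / (Real.sqrt n:ℂ))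
        * ((trH (seqJ a (rhoPoint σ) n x) : ℝ):ℂ)
      = ∑ ε ∈ LamD n, (if x = (∑ j, ε j) then
          Complex.exp (Complex.I * (t:ℂ) * (((∑ j, ε j) : ℤ):ℂ) / (Real.sqrt n:ℂ)) * ((2:ℂ)⁻¹)^n
        else 0) := by
    intro x
    rw [trH_seqJ ha, Complex.ofReal_sum, Finset.mul_sum]
    refine Finset.sum_congr rfl fun ε _ => ?_
    by_cases hc : (∑ j, ε j) = x
    · rw [if_pos hc, if_pos hc.symm, hc]
      push_cast
      ring
    · rw [if_neg hc, if_neg (Ne.symm hc)]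
      simp
  rw [tsum_congr h1]
  have hsum : HasSum (fun x : ℤ => ∑ ε ∈ LamD n, (if x = (∑ j, ε j) then
        Complex.exp (Complex.I * (t:ℂ) * (((∑ j, ε j) : ℤ):ℂ) / (Real.sqrt n:ℂ)) * ((2:ℂ)⁻¹)^n
      else 0)) (∑ ε ∈ LamD n,
        Complex.exp (Complex.I * (t:ℂ) * (((∑ j, ε j) : ℤ):ℂ) / (Real.sqrt n:ℂ)) * ((2:ℂ)⁻¹)^n) :=
    hasSum_sum (fun ε _ => hasSum_ite_eq _ _)
  rw [hsum.tsum_eq]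
  have h2 : ∀ ε ∈ LamD n,
      Complex.exp (Complex.I * (t:ℂ) * (((∑ j, ε j) : ℤ):ℂ) / (Real.sqrt n:ℂ)) * ((2:ℂ)⁻¹)^n
      = ∏ j : Fin n, (Complex.exp (Complex.I * (t:ℂ) * ((ε j : ℤ):ℂ) / (Real.sqrt n:ℂ)) * (2:ℂ)⁻¹) := by
    intro ε _
    rw [Finset.prod_mul_distrib, Finset.prod_const, ← Complex.exp_sum]
    congr 1
    · congr 1
      rw [← Finset.sum_div, ← Finset.mul_sum]
      congr 2
      push_cast
      rfl
    · simp
  rw [Finset.sum_congr rfl h2]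
  rw [show LamD n = Fintype.piFinset (fun _ : Fin n => Lam) from rfl]
  rw [← Finset.prod_univ_sum (fun _ : Fin n => Lam)
    (fun (_ : Fin n) (e : ℤ) => Complex.exp (Complex.I * (t:ℂ) * ((e : ℤ):ℂ) / (Real.sqrt n:ℂ)) * (2:ℂ)⁻¹)]
  rw [Finset.prod_const]
  rw [Finset.card_univ, Fintype.card_fin]
  congr 1
  rw [sum_Lam (fun e => Complex.exp (Complex.I * (t:ℂ) * ((e : ℤ):ℂ) / (Real.sqrt n:ℂ)) * (2:ℂ)⁻¹)]
  have e1 : Complex.I * (t:ℂ) * (((-1:ℤ)):ℂ) / (Real.sqrt n:ℂ)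
      = -(((t:ℂ) / (Real.sqrt n:ℂ)) * Complex.I) := by push_cast; ring
  have e2 : Complex.I * (t:ℂ) * (((1:ℤ)):ℂ) / (Real.sqrt n:ℂ)
      = ((t:ℂ) / (Real.sqrt n:ℂ)) * Complex.I := by push_cast; ring
  rw [e1, e2, Complex.cos]
  ring

/-- The 1-dimensional nucleus `ρ_σ` concentrated at the origin with value `|Z_σ⟩⟨Z_σ|`
is regular: `lim_n ∑_x e^{itx/√n} Tr[ρ⁽ⁿ⁾(x)] = e^{-t²/2}` for every real `t`. -/
theorem stmt15 (a : ℕ → ℋ →L[ℂ] ℋ) (ha : QBN a) (σ : Finset ℕ) :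
    Regular a (rhoPoint σ) := by
  intro t
  have hre := real_cos_pow_lim t
  have hC : Tendsto (fun n : ℕ => (((Real.cos (t / Real.sqrt n))^n : ℝ) : ℂ)) atTop
      (nhds ((Real.exp (-t^2/2) : ℝ) : ℂ)) :=
    (Complex.continuous_ofReal.tendsto _).comp hre
  have hlim : Complex.exp (-(t : ℂ) ^ 2 / 2) = ((Real.exp (-t^2/2) : ℝ) : ℂ) := by
    rw [Complex.ofReal_exp]
    push_cast
    ring_nf
  rw [hlim]
  refine hC.congr fun n => ?_
  rw [show (((Real.cos (t / Real.sqrt n))^n : ℝ) : ℂ)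
      = (Complex.cos ((t : ℂ) / (Real.sqrt n : ℂ)))^n by
    push_cast [Complex.ofReal_cos]
    norm_num]
  exact (char_fun ha σ t n).symm
end
end

section
/- For every n ∈ ℕ and every family of vectors {ξ_ε : ε ∈ Λ^d} ⊂ H one has ‖∑_{ε ∈ Λ^d} C_n^{(ε)} ξ_ε‖² = ∑_{ε ∈ Λ^d} ‖C_n^{(ε)} ξ_ε‖². -/
/- Common setup: quantum Bernoulli noises on `ℋ = ℓ²(Γ)`, `Γ` = finite subsets of `ℕ`. -/

noncomputable section

open ContinuousLinearMap Filter

/-! ### Auxiliary lemmas -/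

/-- `{Z_σ}` as a Hilbert basis of `ℋ`. -/
def Zbasis : HilbertBasis (Finset ℕ) ℂ ℋ :=
  HilbertBasis.ofRepr (LinearIsometryEquiv.refl ℂ ℋ)

lemma Zbasis_eq (σ : Finset ℕ) : Zbasis σ = Z σ := by
  classical
  rw [← Zbasis.repr_symm_single]
  rfl

lemma dense_span_Z :
    (Submodule.span ℂ (Set.range Z)).topologicalClosure = ⊤ := by
  have := Zbasis.dense_span
  rwa [funext Zbasis_eq] at this

lemma clm_ext_Z {T T' : ℋ →L[ℂ] ℋ} (h : ∀ σ, T (Z σ) = T' (Z σ)) : T = T' := by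
  refine ContinuousLinearMap.ext_on (s := Set.range Z) ?_ ?_
  · rw [Submodule.dense_iff_topologicalClosure_eq_top]
    exact dense_span_Z
  · rintro x ⟨σ, rfl⟩; exact h σ

lemma Ssq (a : ℕ → ℋ →L[ℂ] ℋ) (ha : QBN a) (n : ℕ) :
    (adjoint (a n) + a n) * (adjoint (a n) + a n) = 1 := by
  apply clm_ext_Z
  intro σ
  have hS : ∀ τ, (adjoint (a n) + a n) (Z τ)
      = if n ∈ τ then Z (τ.erase n) else Z (insert n τ) := by
    intro τ
    simp only [ContinuousLinearMap.add_apply, ha.1, ha.2]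
    by_cases h : n ∈ τ <;> simp [h]
  rw [ContinuousLinearMap.mul_apply, hS, ContinuousLinearMap.one_apply]
  by_cases h : n ∈ σ
  · simp [hS, h, Finset.insert_erase h]
  · simp [hS, h, Finset.erase_insert h]

lemma LR_zero (a : ℕ → ℋ →L[ℂ] ℋ) (ha : QBN a) (n : ℕ) :
    Lop a n * Rop a n = 0 ∧ Rop a n * Lop a n = 0 := by
  set X := adjoint (a n) + a n with hX
  have h1 : (X - 1) * (X + 1) = X * X - 1 := by noncomm_ring
  have h2 : (X + 1) * (X - 1) = X * X - 1 := by noncomm_ring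
  constructor <;>
  · rw [Lop, Rop, smul_mul_smul_comm]
    first
    | rw [← hX, h1, Ssq a ha n, sub_self, smul_zero]
    | rw [← hX, h2, Ssq a ha n, sub_self, smul_zero]

lemma L_sa (a : ℕ → ℋ →L[ℂ] ℋ) (n : ℕ) : adjoint (Lop a n) = Lop a n := by
  rw [Lop, map_smulₛₗ, map_sub, map_add, adjoint_adjoint]
  have h1 : adjoint (1 : ℋ →L[ℂ] ℋ) = 1 := adjoint_id
  rw [h1]
  have h2 : ((starRingEnd ℂ) (2⁻¹ : ℂ)) = 2⁻¹ := by
    rw [map_inv₀, map_ofNat]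
  rw [h2, add_comm (a n)]

lemma R_sa (a : ℕ → ℋ →L[ℂ] ℋ) (n : ℕ) : adjoint (Rop a n) = Rop a n := by
  rw [Rop, map_smulₛₗ, map_add, map_add, adjoint_adjoint]
  have h1 : adjoint (1 : ℋ →L[ℂ] ℋ) = 1 := adjoint_id
  rw [h1]
  have h2 : ((starRingEnd ℂ) (2⁻¹ : ℂ)) = 2⁻¹ := by
    rw [map_inv₀, map_ofNat]
  rw [h2, add_comm (a n)]

lemma B_sa (a : ℕ → ℋ →L[ℂ] ℋ) (n : ℕ) (e : ℤ) : adjoint (Bop a n e) = Bop a n e := by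
  rw [Bop]; split_ifs <;> [exact L_sa a n; exact R_sa a n]

lemma B_mul_zero (a : ℕ → ℋ →L[ℂ] ℋ) (ha : QBN a) (n : ℕ) {e e' : ℤ}
    (he : e ∈ Lam) (he' : e' ∈ Lam) (hne : e ≠ e') :
    Bop a n e * Bop a n e' = 0 := by
  simp only [Lam, Finset.mem_insert, Finset.mem_singleton] at he he'
  rcases he with rfl | rfl <;> rcases he' with rfl | rfl <;> simp_all [Bop]
  · exact (LR_zero a ha n).1
  · exact (LR_zero a ha n).2

lemma B_inner_zero (a : ℕ → ℋ →L[ℂ] ℋ) (ha : QBN a) (n : ℕ) {e e' : ℤ}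
    (he : e ∈ Lam) (he' : e' ∈ Lam) (hne : e ≠ e') (u x : ℋ) :
    (@inner ℂ _ _ (Bop a n e u) (Bop a n e' x)) = 0 := by
  rw [← B_sa a n e, ContinuousLinearMap.adjoint_inner_left, ← ContinuousLinearMap.mul_apply,
    B_mul_zero a ha n he he' hne]
  simp

section TensorAux

variable {d : ℕ} {Hd : Type} [NormedAddCommGroup Hd] [InnerProductSpace ℂ Hd] [CompleteSpace Hd]

lemma tensor_orth (a : ℕ → ℋ →L[ℂ] ℋ) (ha : QBN a)
    (tpv : MultilinearMap ℂ (fun _ : Fin d => ℋ) Hd)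
    (tp : (Fin d → ℋ →L[ℂ] ℋ) → (Hd →L[ℂ] Hd)) (htp : IsTensorD tpv tp)
    (n : ℕ) {v w : Fin d → ℤ} (hv : v ∈ LamD d) (hw : w ∈ LamD d) (hne : v ≠ w) :
    adjoint (tp fun j => Bop a n (v j)) ∘L (tp fun j => Bop a n (w j)) = 0 := by
  rw [LamD, Fintype.mem_piFinset] at hv hw
  obtain ⟨j0, hj0⟩ := Function.ne_iff.mp hne
  set Tv := tp fun j => Bop a n (v j)
  set Tw := tp fun j => Bop a n (w j)
  have key : ∀ u x : Fin d → ℋ, (@inner ℂ _ _ (Tv (tpv u)) (Tw (tpv x))) = 0 := by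
    intro u x
    rw [htp.2.2, htp.2.2, htp.1]
    exact Finset.prod_eq_zero (Finset.mem_univ j0)
      (B_inner_zero a ha n (hv j0) (hw j0) hj0 (u j0) (x j0))
  have hdense : Dense ((Submodule.span ℂ (Set.range fun u => tpv u)) : Set Hd) := by
    rw [Submodule.dense_iff_topologicalClosure_eq_top]; exact htp.2.1
  have step1 : ∀ x : Fin d → ℋ, (adjoint Tv ∘L Tw) (tpv x) = 0 := by
    intro x
    have horth : ((adjoint Tv ∘L Tw) (tpv x)) ∈
        (Submodule.span ℂ (Set.range fun u => tpv u))ᗮ := by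
      rw [Submodule.mem_orthogonal]
      intro u hu
      induction hu using Submodule.span_induction with
      | mem y hy =>
        obtain ⟨u', rfl⟩ := hy
        rw [ContinuousLinearMap.comp_apply, ContinuousLinearMap.adjoint_inner_right]
        exact key u' x
      | zero => simp
      | add y z _ _ hy hz => rw [inner_add_left, hy, hz, add_zero]
      | smul c y _ hy => rw [inner_smul_left, hy, mul_zero]
    rw [Submodule.topologicalClosure_eq_top_iff.mp htp.2.1] at horth
    simpa using horth
  refine ContinuousLinearMap.ext_on (s := Set.range fun u => tpv u) hdense ?_
  rintro y ⟨u', rfl⟩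
  simpa using step1 u'

lemma Cop_inner_zero (a : ℕ → ℋ →L[ℂ] ℋ) (ha : QBN a)
    (tpv : MultilinearMap ℂ (fun _ : Fin d => ℋ) Hd)
    (tp : (Fin d → ℋ →L[ℂ] ℋ) → (Hd →L[ℂ] Hd)) (htp : IsTensorD tpv tp)
    (K : Hd ≃ₗᵢ[ℂ] ℋ) (n : ℕ) {v w : Fin d → ℤ}
    (hv : v ∈ LamD d) (hw : w ∈ LamD d) (hne : v ≠ w) (ξ η : ℋ) :
    (@inner ℂ _ _ (Cop a tp K n v ξ) (Cop a tp K n w η)) = 0 := by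
  simp only [Cop, conjK, ContinuousLinearMap.comp_apply,
    LinearIsometry.coe_toContinuousLinearMap]
  rw [K.toLinearIsometry.inner_map_map, ← ContinuousLinearMap.adjoint_inner_right,
    ← ContinuousLinearMap.comp_apply, tensor_orth a ha tpv tp htp n hv hw hne]
  simp

end TensorAux

/-- For every `n` and every family `{ξ_ε : ε ∈ Λ^d} ⊆ ℋ`,
`‖∑_{ε ∈ Λ^d} C_n^{(ε)} ξ_ε‖² = ∑_{ε ∈ Λ^d} ‖C_n^{(ε)} ξ_ε‖²`. -/
theorem stmt17 (a : ℕ → ℋ →L[ℂ] ℋ) (ha : QBN a)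
    (d : ℕ) (hd : 2 ≤ d)
    (Hd : Type) [NormedAddCommGroup Hd] [InnerProductSpace ℂ Hd] [CompleteSpace Hd]
    (tpv : MultilinearMap ℂ (fun _ : Fin d => ℋ) Hd)
    (tp : (Fin d → ℋ →L[ℂ] ℋ) → (Hd →L[ℂ] Hd))
    (htp : IsTensorD tpv tp)
    (K : Hd ≃ₗᵢ[ℂ] ℋ) (n : ℕ) (ξ : (Fin d → ℤ) → ℋ) :
    ‖∑ v ∈ LamD d, Cop a tp K n v (ξ v)‖ ^ 2 =
      ∑ v ∈ LamD d, ‖Cop a tp K n v (ξ v)‖ ^ 2 := by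
  set f : (Fin d → ℤ) → ℋ := fun v => Cop a tp K n v (ξ v) with hf
  have key : (@inner ℂ _ _ (∑ v ∈ LamD d, f v) (∑ v ∈ LamD d, f v))
      = ∑ v ∈ LamD d, (@inner ℂ _ _ (f v) (f v)) := by
    rw [sum_inner]
    refine Finset.sum_congr rfl fun v hv => ?_
    rw [inner_sum]
    exact Finset.sum_eq_single_of_mem v hv (fun w hw hne =>
      Cop_inner_zero a ha tpv tp htp K n hv hw (Ne.symm hne) (ξ v) (ξ w))
  have h := congrArg Complex.re key
  simp only [← RCLike.re_to_complex] at h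
  rw [inner_self_eq_norm_sq, map_sum] at h
  rw [h]
  exact Finset.sum_congr rfl fun v _ => inner_self_eq_norm_sq (f v)
end
end

section
/- For every n ∈ ℕ there exists a unitary operator U_n^{(d)} on the Hilbert space ℓ²(ℤ^d; H) of square-summable H-valued functions on ℤ^d such that (U_n^{(d)} W)(x) = ∑_{ε ∈ Λ^d} C_n^{(ε)} W(x − ε) for all x ∈ ℤ^d and all W ∈ ℓ²(ℤ^d; H). -/
/- Common setup: quantum Bernoulli noises on `ℋ = ℓ²(Γ)`, `Γ` = finite subsets of `ℕ`. -/

noncomputable section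

open ContinuousLinearMap Filter

section Chunk1

namespace Stmt18Aux

open ContinuousLinearMap

/-- `S_n = ∂_n* + ∂_n`. -/
def Sop (a : ℕ → ℋ →L[ℂ] ℋ) (n : ℕ) : ℋ →L[ℂ] ℋ := adjoint (a n) + a n

lemma Sop_Z (a : ℕ → ℋ →L[ℂ] ℋ) (ha : QBN a) (n : ℕ) (σ : Finset ℕ) :
    Sop a n (Z σ) = if n ∈ σ then Z (σ.erase n) else Z (insert n σ) := by
  simp only [Sop, add_apply, ha.1 n σ, ha.2 n σ]
  by_cases h : n ∈ σ <;> simp [h]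

lemma dense_span_Z : Dense ((Submodule.span ℂ (Set.range Z) : Submodule ℂ ℋ) : Set ℋ) := by
  intro f
  have hsum := lp.hasSum_single (E := fun _ : Finset ℕ => ℂ) (p := 2) (by norm_num) f
  refine mem_closure_of_tendsto hsum ?_
  filter_upwards with m
  refine Submodule.sum_mem _ fun σ _ => ?_
  have : lp.single (E := fun _ : Finset ℕ => ℂ) 2 σ (f σ) = (f σ : ℂ) • Z σ := by
    rw [Z, ← lp.single_smul]; norm_num
  rw [this]
  exact Submodule.smul_mem _ _ (Submodule.subset_span ⟨σ, rfl⟩)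

lemma ext_Z {T T' : ℋ →L[ℂ] ℋ} (h : ∀ σ, T (Z σ) = T' (Z σ)) : T = T' :=
  ContinuousLinearMap.ext_on dense_span_Z (by rintro _ ⟨σ, rfl⟩; exact h σ)

lemma Sop_sq (a : ℕ → ℋ →L[ℂ] ℋ) (ha : QBN a) (n : ℕ) :
    Sop a n ∘L Sop a n = 1 := by
  refine ext_Z fun σ => ?_
  simp only [comp_apply, one_apply, Sop_Z a ha n]
  by_cases h : n ∈ σ
  · simp [h, Finset.mem_erase, Sop_Z a ha, Finset.insert_erase h]
  · simp [h, Sop_Z a ha, Finset.erase_insert h]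

lemma Sop_adjoint (a : ℕ → ℋ →L[ℂ] ℋ) (n : ℕ) : adjoint (Sop a n) = Sop a n := by
  simp only [Sop, map_add, adjoint_adjoint, add_comm]

lemma Lop_eq (a : ℕ → ℋ →L[ℂ] ℋ) (n : ℕ) : Lop a n = (2:ℂ)⁻¹ • (Sop a n - 1) := by
  simp only [Lop, Sop]
lemma Rop_eq (a : ℕ → ℋ →L[ℂ] ℋ) (n : ℕ) : Rop a n = (2:ℂ)⁻¹ • (Sop a n + 1) := by
  simp only [Rop, Sop]

end Stmt18Aux

end Chunk1
section Chunk2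
namespace Stmt18Aux
open ContinuousLinearMap

variable (a : ℕ → ℋ →L[ℂ] ℋ) (n : ℕ)

lemma smul_mul_expand (x y : ℋ →L[ℂ] ℋ) :
    ((2:ℂ)⁻¹ • x) * ((2:ℂ)⁻¹ • y) = ((2:ℂ)⁻¹ * (2:ℂ)⁻¹) • (x * y) :=
  smul_mul_smul_comm _ _ _ _

lemma Sop_mul_self (ha : QBN a) : Sop a n * Sop a n = 1 := Sop_sq a ha n

lemma LL_add_RR (ha : QBN a) : Lop a n * Lop a n + Rop a n * Rop a n = 1 := by
  have hS := Sop_mul_self a n ha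
  rw [Lop_eq, Rop_eq, smul_mul_expand, smul_mul_expand, ← smul_add]
  have h1 : (Sop a n - 1) * (Sop a n - 1) + (Sop a n + 1) * (Sop a n + 1)
      = 2 • (Sop a n * Sop a n) + 2 • 1 := by noncomm_ring
  rw [h1, hS]
  have h2 : 2 • (1 : ℋ →L[ℂ] ℋ) + 2 • 1 = (4:ℂ) • 1 := by
    have : ((4:ℂ) • (1 : ℋ →L[ℂ] ℋ)) = 4 • (1 : ℋ →L[ℂ] ℋ) := by
      norm_num [← Nat.cast_smul_eq_nsmul ℂ]
    rw [this]; abel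
  rw [h2, smul_smul]; norm_num

lemma LR_zero (ha : QBN a) : Lop a n * Rop a n = 0 := by
  have hS := Sop_mul_self a n ha
  rw [Lop_eq, Rop_eq, smul_mul_expand]
  have h1 : (Sop a n - 1) * (Sop a n + 1) = Sop a n * Sop a n - 1 := by noncomm_ring
  rw [h1, hS, sub_self, smul_zero]

lemma RL_zero (ha : QBN a) : Rop a n * Lop a n = 0 := by
  have hS := Sop_mul_self a n ha
  rw [Lop_eq, Rop_eq, smul_mul_expand]
  have h1 : (Sop a n + 1) * (Sop a n - 1) = Sop a n * Sop a n - 1 := by noncomm_ring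
  rw [h1, hS, sub_self, smul_zero]

lemma mem_Lam {e : ℤ} (he : e ∈ Lam) : e = -1 ∨ e = 1 := by
  simpa [Lam, Finset.mem_insert, Finset.mem_singleton] using he

lemma Bop_mul_ne (ha : QBN a) {e e' : ℤ} (he : e ∈ Lam) (he' : e' ∈ Lam) (hne : e ≠ e') :
    Bop a n e * Bop a n e' = 0 := by
  rcases mem_Lam he with rfl | rfl <;> rcases mem_Lam he' with rfl | rfl <;>
    simp_all [Bop, LR_zero a n ha, RL_zero a n ha]

lemma Bop_sum_sq (ha : QBN a) : ∑ e ∈ Lam, Bop a n e * Bop a n e = 1 := by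
  rw [Lam, Finset.sum_pair (by decide : (-1:ℤ) ≠ 1)]
  simpa [Bop] using LL_add_RR a n ha

lemma Lop_adjoint : adjoint (Lop a n) = Lop a n := by
  rw [Lop_eq, map_smulₛₗ, map_sub, Sop_adjoint]
  simp [ContinuousLinearMap.one_def, adjoint_id, map_ofNat]

lemma Rop_adjoint : adjoint (Rop a n) = Rop a n := by
  rw [Rop_eq, map_smulₛₗ, map_add, Sop_adjoint]
  simp [ContinuousLinearMap.one_def, adjoint_id, map_ofNat]

lemma Bop_adjoint (e : ℤ) : adjoint (Bop a n e) = Bop a n e := by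
  rw [Bop]; split <;> simp [Lop_adjoint, Rop_adjoint, Bop]

end Stmt18Aux
end Chunk2
set_option linter.unusedSectionVars false
section Chunk3
namespace Stmt18Aux
open ContinuousLinearMap

variable {d : ℕ} {Hd : Type} [NormedAddCommGroup Hd] [InnerProductSpace ℂ Hd] [CompleteSpace Hd]
variable {tpv : MultilinearMap ℂ (fun _ : Fin d => ℋ) Hd}
variable {tp : (Fin d → ℋ →L[ℂ] ℋ) → (Hd →L[ℂ] Hd)}

lemma dense_tpv (htp : IsTensorD tpv tp) :
    Dense ((Submodule.span ℂ (Set.range fun u => tpv u) : Submodule ℂ Hd) : Set Hd) :=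
  Submodule.dense_iff_topologicalClosure_eq_top.mpr htp.2.1

lemma ext_tpv (htp : IsTensorD tpv tp) {T T' : Hd →L[ℂ] Hd}
    (h : ∀ u, T (tpv u) = T' (tpv u)) : T = T' :=
  ContinuousLinearMap.ext_on (dense_tpv htp) (by rintro _ ⟨u, rfl⟩; exact h u)

lemma eq_of_inner_tpv (htp : IsTensorD tpv tp) {z z' : Hd}
    (h : ∀ u, (@inner ℂ _ _ (tpv u) z) = @inner ℂ _ _ (tpv u) z') : z = z' := by
  have hmem : z - z' ∈ (Submodule.span ℂ (Set.range fun u => tpv u))ᗮ := by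
    rw [Submodule.mem_orthogonal]
    intro x hx
    refine Submodule.span_induction ?_ ?_ ?_ ?_ hx
    · rintro _ ⟨u, rfl⟩
      rw [inner_sub_right, sub_eq_zero]
      exact h u
    · simp
    · intro x y _ _ hx hy
      rw [inner_add_left, hx, hy, add_zero]
    · intro c x _ hx
      rw [inner_smul_left, hx, mul_zero]
  have hbot : (Submodule.span ℂ (Set.range fun u => tpv u))ᗮ = ⊥ :=
    Submodule.topologicalClosure_eq_top_iff.mp htp.2.1
  rw [hbot, Submodule.mem_bot, sub_eq_zero] at hmem
  exact hmem

lemma tp_adjoint (htp : IsTensorD tpv tp) (A : Fin d → ℋ →L[ℂ] ℋ) :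
    adjoint (tp A) = tp fun j => adjoint (A j) := by
  refine ext_tpv htp fun u => ?_
  refine eq_of_inner_tpv htp fun v => ?_
  rw [adjoint_inner_right, htp.2.2, htp.2.2, htp.1, htp.1]
  exact Finset.prod_congr rfl fun j _ => (adjoint_inner_right _ _ _).symm

lemma tp_comp (htp : IsTensorD tpv tp) (A B : Fin d → ℋ →L[ℂ] ℋ) :
    tp A ∘L tp B = tp fun j => A j ∘L B j := by
  refine ext_tpv htp fun u => ?_
  rw [comp_apply, htp.2.2, htp.2.2, htp.2.2]
  rfl

lemma tp_zero (htp : IsTensorD tpv tp) (A : Fin d → ℋ →L[ℂ] ℋ) (j0 : Fin d)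
    (h : A j0 = 0) : tp A = 0 := by
  refine ext_tpv htp fun u => ?_
  rw [htp.2.2, zero_apply]
  exact tpv.map_coord_zero j0 (by rw [h]; rfl)

lemma mem_LamD {v : Fin d → ℤ} (hv : v ∈ LamD d) (j : Fin d) : v j ∈ Lam :=
  Fintype.mem_piFinset.mp hv j

lemma tp_B_mul_ne (htp : IsTensorD tpv tp) (a : ℕ → ℋ →L[ℂ] ℋ) (ha : QBN a) (n : ℕ)
    {v w : Fin d → ℤ} (hv : v ∈ LamD d) (hw : w ∈ LamD d) (hne : v ≠ w) :
    (tp fun j => Bop a n (v j)) ∘L (tp fun j => Bop a n (w j)) = 0 := by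
  rw [tp_comp htp]
  obtain ⟨j0, hj0⟩ := Function.ne_iff.mp hne
  exact tp_zero htp _ j0 (Bop_mul_ne a n ha (mem_LamD hv j0) (mem_LamD hw j0) hj0)

lemma tp_B_sum_one (htp : IsTensorD tpv tp) (a : ℕ → ℋ →L[ℂ] ℋ) (ha : QBN a) (n : ℕ) :
    ∑ v ∈ LamD d, (tp fun j => Bop a n (v j)) ∘L (tp fun j => Bop a n (v j)) = 1 := by
  refine ext_tpv htp fun u => ?_
  rw [ContinuousLinearMap.sum_apply, ContinuousLinearMap.one_apply]
  have hterm : ∀ v ∈ LamD d,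
      ((tp fun j => Bop a n (v j)) ∘L (tp fun j => Bop a n (v j))) (tpv u)
      = tpv fun j => Bop a n (v j) (Bop a n (v j) (u j)) := by
    intro v _
    rw [comp_apply, htp.2.2, htp.2.2]
  rw [Finset.sum_congr rfl hterm]
  rw [LamD, ← MultilinearMap.map_sum_finset tpv (fun j e => Bop a n e (Bop a n e (u j)))]
  congr 1
  funext j
  have := congrArg (fun (T : ℋ →L[ℂ] ℋ) => T (u j)) (Bop_sum_sq a n ha)
  simpa [ContinuousLinearMap.sum_apply, ContinuousLinearMap.mul_apply] using this

lemma tp_B_adjoint (htp : IsTensorD tpv tp) (a : ℕ → ℋ →L[ℂ] ℋ) (n : ℕ) (v : Fin d → ℤ) :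
    adjoint (tp fun j => Bop a n (v j)) = tp fun j => Bop a n (v j) := by
  rw [tp_adjoint htp]
  congr 1
  funext j
  exact Bop_adjoint a n (v j)

end Stmt18Aux
end Chunk3
section Chunk4
namespace Stmt18Aux
open ContinuousLinearMap

variable {d : ℕ} {Hd : Type} [NormedAddCommGroup Hd] [InnerProductSpace ℂ Hd] [CompleteSpace Hd]
variable {tpv : MultilinearMap ℂ (fun _ : Fin d => ℋ) Hd}
variable {tp : (Fin d → ℋ →L[ℂ] ℋ) → (Hd →L[ℂ] Hd)}
variable (a : ℕ → ℋ →L[ℂ] ℋ) (K : Hd ≃ₗᵢ[ℂ] ℋ) (n : ℕ)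

lemma Cop_apply (v : Fin d → ℤ) (u : ℋ) :
    Cop a tp K n v u = K ((tp fun j => Bop a n (v j)) (K.symm u)) := rfl

lemma Cop_Cop_ne (htp : IsTensorD tpv tp) (ha : QBN a)
    {v w : Fin d → ℤ} (hv : v ∈ LamD d) (hw : w ∈ LamD d) (hne : v ≠ w) (u : ℋ) :
    Cop a tp K n v (Cop a tp K n w u) = 0 := by
  rw [Cop_apply, Cop_apply, LinearIsometryEquiv.symm_apply_apply]
  have := congrArg (fun (T : Hd →L[ℂ] Hd) => T (K.symm u)) (tp_B_mul_ne htp a ha n hv hw hne)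
  simp only [comp_apply, zero_apply] at this
  rw [this, map_zero]

lemma Cop_Cop_sum (htp : IsTensorD tpv tp) (ha : QBN a) (u : ℋ) :
    ∑ v ∈ LamD d, Cop a tp K n v (Cop a tp K n v u) = u := by
  have hterm : ∀ v ∈ LamD d, Cop a tp K n v (Cop a tp K n v u)
      = K (((tp fun j => Bop a n (v j)) ∘L (tp fun j => Bop a n (v j))) (K.symm u)) := by
    intro v _
    rw [Cop_apply, Cop_apply, LinearIsometryEquiv.symm_apply_apply, comp_apply]
  rw [Finset.sum_congr rfl hterm, ← map_sum, ← ContinuousLinearMap.sum_apply,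
    tp_B_sum_one htp a ha n, ContinuousLinearMap.one_apply, LinearIsometryEquiv.apply_symm_apply]

lemma Cop_inner (htp : IsTensorD tpv tp) (v : Fin d → ℤ) (u u' : ℋ) :
    (@inner ℂ _ _ (Cop a tp K n v u) u') = @inner ℂ _ _ u (Cop a tp K n v u') := by
  rw [Cop_apply, Cop_apply]
  calc (@inner ℂ _ _ (K ((tp fun j => Bop a n (v j)) (K.symm u))) u')
      = @inner ℂ _ _ (K ((tp fun j => Bop a n (v j)) (K.symm u))) (K (K.symm u')) := by
        rw [LinearIsometryEquiv.apply_symm_apply]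
    _ = @inner ℂ _ _ ((tp fun j => Bop a n (v j)) (K.symm u)) (K.symm u') :=
        K.inner_map_map _ _
    _ = @inner ℂ _ _ (K.symm u) ((tp fun j => Bop a n (v j)) (K.symm u')) := by
        conv_lhs => rw [← tp_B_adjoint htp a n v]
        rw [adjoint_inner_left]
    _ = @inner ℂ _ _ (K (K.symm u)) (K ((tp fun j => Bop a n (v j)) (K.symm u'))) :=
        (K.inner_map_map _ _).symm
    _ = @inner ℂ _ _ u (K ((tp fun j => Bop a n (v j)) (K.symm u'))) := by
        rw [LinearIsometryEquiv.apply_symm_apply]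

lemma Cop_inner_Cop_ne (htp : IsTensorD tpv tp) (ha : QBN a)
    {v w : Fin d → ℤ} (hv : v ∈ LamD d) (hw : w ∈ LamD d) (hne : v ≠ w) (u u' : ℋ) :
    (@inner ℂ _ _ (Cop a tp K n v u) (Cop a tp K n w u')) = 0 := by
  rw [Cop_inner a K n htp]
  rw [Cop_Cop_ne a K n htp ha hv hw hne u', inner_zero_right]

lemma Cop_norm_sq_sum (htp : IsTensorD tpv tp) (ha : QBN a) (u : ℋ) :
    ∑ v ∈ LamD d, ‖Cop a tp K n v u‖ ^ 2 = ‖u‖ ^ 2 := by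
  have h : ∀ v ∈ LamD d, ‖Cop a tp K n v u‖ ^ 2
      = (@inner ℂ _ _ u (Cop a tp K n v (Cop a tp K n v u))).re := by
    intro v _
    rw [← Cop_inner a K n htp, ← inner_self_eq_norm_sq (𝕜 := ℂ)]
    rfl
  rw [Finset.sum_congr rfl h, ← Complex.re_sum]
  rw [← inner_sum (LamD d) (fun v => Cop a tp K n v (Cop a tp K n v u)) u]
  rw [Cop_Cop_sum a K n htp ha]
  simpa using inner_self_eq_norm_sq (𝕜 := ℂ) u

end Stmt18Aux
end Chunk4
section Chunk5
namespace Stmt18Aux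
open ContinuousLinearMap
open scoped ENNReal

variable {d : ℕ}

/-- The candidate map: `W ↦ (x ↦ ∑_{v ∈ Λ^d} C v (W (x - e • v)))`. -/
def Tfun (C : (Fin d → ℤ) → ℋ →L[ℂ] ℋ) (e : ℤ) (W : l2ZH d) : (Fin d → ℤ) → ℋ :=
  fun x => ∑ v ∈ LamD d, C v (W (x - e • v))

lemma summable_W_sq (W : l2ZH d) : Summable fun x => ‖W x‖ ^ 2 := by
  have h := lp.memℓp W
  rw [memℓp_gen_iff (by norm_num : 0 < (2 : ℝ≥0∞).toReal)] at h
  have h2 : ∀ x : Fin d → ℤ, ‖W x‖ ^ (2 : ℝ≥0∞).toReal = ‖W x‖ ^ 2 := by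
    intro x
    rw [show (2 : ℝ≥0∞).toReal = ((2 : ℕ) : ℝ) by norm_num, Real.rpow_natCast]
  exact h.congr h2

lemma summable_W_shift_sq (W : l2ZH d) (c : Fin d → ℤ) :
    Summable fun x => ‖W (x - c)‖ ^ 2 :=
  (Equiv.subRight c).summable_iff.mpr (summable_W_sq W)

lemma summable_term (C : (Fin d → ℤ) → ℋ →L[ℂ] ℋ) (W : l2ZH d) (v c : Fin d → ℤ) :
    Summable fun x => ‖C v (W (x - c))‖ ^ 2 := by
  refine Summable.of_nonneg_of_le (fun x => by positivity)
    (fun x => ?_) ((summable_W_shift_sq W c).mul_left (‖C v‖ ^ 2))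
  calc ‖C v (W (x - c))‖ ^ 2 ≤ (‖C v‖ * ‖W (x - c)‖) ^ 2 := by
        have := (C v).le_opNorm (W (x - c))
        exact pow_le_pow_left₀ (norm_nonneg _) this 2
    _ = ‖C v‖ ^ 2 * ‖W (x - c)‖ ^ 2 := by ring

lemma summable_term' (C : (Fin d → ℤ) → ℋ →L[ℂ] ℋ) (W : l2ZH d) (v : Fin d → ℤ) :
    Summable fun x => ‖C v (W x)‖ ^ 2 := by
  have := summable_term C W v 0
  simpa using this

lemma norm_sum_sq_of_orth (C : (Fin d → ℤ) → ℋ →L[ℂ] ℋ)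
    (horth : ∀ v ∈ LamD d, ∀ w ∈ LamD d, v ≠ w →
      ∀ u u' : ℋ, (@inner ℂ _ _ (C v u) (C w u')) = 0)
    (f : (Fin d → ℤ) → ℋ) :
    ‖∑ v ∈ LamD d, C v (f v)‖ ^ 2 = ∑ v ∈ LamD d, ‖C v (f v)‖ ^ 2 := by
  rw [← inner_self_eq_norm_sq (𝕜 := ℂ), sum_inner]
  have h : ∀ v ∈ LamD d,
      (@inner ℂ _ _ (C v (f v)) (∑ w ∈ LamD d, C w (f w)))
      = @inner ℂ _ _ (C v (f v)) (C v (f v)) := by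
    intro v hv
    rw [inner_sum]
    exact Finset.sum_eq_single_of_mem v hv
      (fun w hw hne => horth v hv w hw (Ne.symm hne) _ _)
  rw [Finset.sum_congr rfl h]
  rw [show (RCLike.re : ℂ → ℝ) = Complex.re from rfl, Complex.re_sum]
  exact Finset.sum_congr rfl fun v _ => inner_self_eq_norm_sq (𝕜 := ℂ) _

lemma tsum_Tfun_eq (C : (Fin d → ℤ) → ℋ →L[ℂ] ℋ)
    (horth : ∀ v ∈ LamD d, ∀ w ∈ LamD d, v ≠ w →
      ∀ u u' : ℋ, (@inner ℂ _ _ (C v u) (C w u')) = 0)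
    (hiso : ∀ u : ℋ, ∑ v ∈ LamD d, ‖C v u‖ ^ 2 = ‖u‖ ^ 2)
    (e : ℤ) (W : l2ZH d) :
    Summable (fun x => ‖Tfun C e W x‖ ^ 2) ∧
      ∑' x, ‖Tfun C e W x‖ ^ 2 = ∑' x, ‖W x‖ ^ 2 := by
  have hsq : ∀ x, ‖Tfun C e W x‖ ^ 2 = ∑ v ∈ LamD d, ‖C v (W (x - e • v))‖ ^ 2 :=
    fun x => norm_sum_sq_of_orth C horth _
  have hterm : ∀ v ∈ LamD d, Summable fun x => ‖C v (W (x - e • v))‖ ^ 2 :=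
    fun v _ => summable_term C W v _
  constructor
  · exact (summable_sum hterm).congr fun x => (hsq x).symm
  · rw [tsum_congr hsq, Summable.tsum_finsetSum hterm]
    have hshift : ∀ v ∈ LamD d,
        ∑' x, ‖C v (W (x - e • v))‖ ^ 2 = ∑' y, ‖C v (W y)‖ ^ 2 := by
      intro v _
      exact (Equiv.subRight (e • v)).tsum_eq fun y => ‖C v (W y)‖ ^ 2
    rw [Finset.sum_congr rfl hshift,
      ← Summable.tsum_finsetSum (fun v _ => summable_term' C W v)]
    exact tsum_congr fun y => hiso (W y)

lemma memℓp_Tfun (C : (Fin d → ℤ) → ℋ →L[ℂ] ℋ)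
    (horth : ∀ v ∈ LamD d, ∀ w ∈ LamD d, v ≠ w →
      ∀ u u' : ℋ, (@inner ℂ _ _ (C v u) (C w u')) = 0)
    (hiso : ∀ u : ℋ, ∑ v ∈ LamD d, ‖C v u‖ ^ 2 = ‖u‖ ^ 2)
    (e : ℤ) (W : l2ZH d) : Memℓp (Tfun C e W) 2 := by
  apply memℓp_gen
  have h := (tsum_Tfun_eq C horth hiso e W).1
  refine h.congr fun x => ?_
  rw [show (2 : ℝ≥0∞).toReal = ((2 : ℕ) : ℝ) by norm_num, Real.rpow_natCast]

end Stmt18Aux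
end Chunk5
section Chunk6
namespace Stmt18Aux
open ContinuousLinearMap
open scoped ENNReal

variable {d : ℕ}

def TfunL (C : (Fin d → ℤ) → ℋ →L[ℂ] ℋ) (e : ℤ)
    (hmem : ∀ W : l2ZH d, Memℓp (Tfun C e W) 2) : l2ZH d →ₗ[ℂ] l2ZH d where
  toFun W := ⟨Tfun C e W, hmem W⟩
  map_add' W W' := by
    apply lp.ext
    funext x
    have h1 : ∀ y, (W + W') y = W y + W' y := fun y => by
      rw [lp.coeFn_add]; rfl
    simp only [Tfun, h1, map_add, Finset.sum_add_distrib]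
    rfl
  map_smul' c W := by
    apply lp.ext
    funext x
    have h1 : ∀ y, (c • W) y = c • (W y) := fun y => by
      rw [lp.coeFn_smul]; rfl
    simp only [Tfun, h1, map_smul, ← Finset.smul_sum, RingHom.id_apply]
    rfl

lemma TfunL_apply (C : (Fin d → ℤ) → ℋ →L[ℂ] ℋ) (e : ℤ)
    (hmem : ∀ W : l2ZH d, Memℓp (Tfun C e W) 2) (W : l2ZH d) (x : Fin d → ℤ) :
    (TfunL C e hmem W) x = ∑ v ∈ LamD d, C v (W (x - e • v)) := rfl

lemma norm_TfunL (C : (Fin d → ℤ) → ℋ →L[ℂ] ℋ)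
    (horth : ∀ v ∈ LamD d, ∀ w ∈ LamD d, v ≠ w →
      ∀ u u' : ℋ, (@inner ℂ _ _ (C v u) (C w u')) = 0)
    (hiso : ∀ u : ℋ, ∑ v ∈ LamD d, ‖C v u‖ ^ 2 = ‖u‖ ^ 2)
    (e : ℤ) (hmem : ∀ W : l2ZH d, Memℓp (Tfun C e W) 2) (W : l2ZH d) :
    ‖TfunL C e hmem W‖ = ‖W‖ := by
  have h0 : ∀ r : ℝ, r ^ (2:ℝ≥0∞).toReal = r ^ (2:ℕ) := fun r => by
    rw [show (2:ℝ≥0∞).toReal = ((2:ℕ):ℝ) by norm_num, Real.rpow_natCast]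
  have hpow : ∀ V : l2ZH d, ‖V‖ ^ (2:ℕ) = ∑' x, ‖V x‖ ^ (2:ℕ) := by
    intro V
    have h := lp.norm_rpow_eq_tsum (p := 2) (by norm_num) V
    simp only [h0] at h
    exact h
  have key : ‖TfunL C e hmem W‖ ^ (2:ℕ) = ‖W‖ ^ (2:ℕ) := by
    rw [hpow, hpow]
    have hcoe : ∀ x, (TfunL C e hmem W) x = Tfun C e W x := fun _ => rfl
    rw [tsum_congr fun x => by rw [hcoe]]
    exact (tsum_Tfun_eq C horth hiso e W).2
  have h2 : ∀ V : l2ZH d, ‖V‖ = Real.sqrt (‖V‖ ^ (2:ℕ)) := fun V =>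
    (Real.sqrt_sq (norm_nonneg _)).symm
  rw [h2, key, ← h2]

lemma Tfun_comp_eq (C : (Fin d → ℤ) → ℋ →L[ℂ] ℋ)
    (hCC0 : ∀ v ∈ LamD d, ∀ w ∈ LamD d, v ≠ w → ∀ u : ℋ, C v (C w u) = 0)
    (hsum : ∀ u : ℋ, ∑ v ∈ LamD d, C v (C v u) = u)
    (e f : ℤ) (hef : f = -e) (W : l2ZH d) (hmem : Memℓp (Tfun C f W) 2) (x : Fin d → ℤ) :
    Tfun C e (⟨Tfun C f W, hmem⟩ : l2ZH d) x = W x := by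
  subst hef
  have hcoe : ∀ y, (⟨Tfun C (-e) W, hmem⟩ : l2ZH d) y = Tfun C (-e) W y := fun _ => rfl
  simp only [Tfun, hcoe]
  have hdiag : ∀ v ∈ LamD d,
      C v (∑ w ∈ LamD d, C w (W (x - e • v - -e • w))) = C v (C v (W x)) := by
    intro v hv
    rw [map_sum]
    have h1 : ∑ w ∈ LamD d, C v (C w (W (x - e • v - -e • w)))
        = C v (C v (W (x - e • v - -e • v))) :=
      Finset.sum_eq_single_of_mem v hv fun w hw hne => hCC0 v hv w hw (Ne.symm hne) _
    rw [h1]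
    congr 2
    rw [neg_smul, sub_neg_eq_add, sub_add_cancel]
  rw [Finset.sum_congr rfl hdiag, hsum]

end Stmt18Aux
end Chunk6
/-- For every `n` there exists a unitary operator `U_n^{(d)}` on `ℓ²(ℤ^d; ℋ)` with
`(U_n^{(d)} W)(x) = ∑_{ε ∈ Λ^d} C_n^{(ε)} W(x - ε)`. -/
theorem stmt18 (a : ℕ → ℋ →L[ℂ] ℋ) (ha : QBN a)
    (d : ℕ) (hd : 2 ≤ d)
    (Hd : Type) [NormedAddCommGroup Hd] [InnerProductSpace ℂ Hd] [CompleteSpace Hd]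
    (tpv : MultilinearMap ℂ (fun _ : Fin d => ℋ) Hd)
    (tp : (Fin d → ℋ →L[ℂ] ℋ) → (Hd →L[ℂ] Hd))
    (htp : IsTensorD tpv tp)
    (K : Hd ≃ₗᵢ[ℂ] ℋ) (n : ℕ) :
    ∃ U : l2ZH d ≃ₗᵢ[ℂ] l2ZH d, ∀ (W : l2ZH d) (x : Fin d → ℤ),
      (U W) x = ∑ v ∈ LamD d, Cop a tp K n v (W (x - v)) := by
  classical
  set C : (Fin d → ℤ) → ℋ →L[ℂ] ℋ := Cop a tp K n with hC
  have horth : ∀ v ∈ LamD d, ∀ w ∈ LamD d, v ≠ w →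
      ∀ u u' : ℋ, (@inner ℂ _ _ (C v u) (C w u')) = 0 :=
    fun v hv w hw hne u u' => Stmt18Aux.Cop_inner_Cop_ne a K n htp ha hv hw hne u u'
  have hiso : ∀ u : ℋ, ∑ v ∈ LamD d, ‖C v u‖ ^ 2 = ‖u‖ ^ 2 :=
    fun u => Stmt18Aux.Cop_norm_sq_sum a K n htp ha u
  have hCC0 : ∀ v ∈ LamD d, ∀ w ∈ LamD d, v ≠ w → ∀ u : ℋ, C v (C w u) = 0 :=
    fun v hv w hw hne u => Stmt18Aux.Cop_Cop_ne a K n htp ha hv hw hne u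
  have hsum : ∀ u : ℋ, ∑ v ∈ LamD d, C v (C v u) = u :=
    fun u => Stmt18Aux.Cop_Cop_sum a K n htp ha u
  have hmem1 : ∀ W : l2ZH d, Memℓp (Stmt18Aux.Tfun C 1 W) 2 :=
    fun W => Stmt18Aux.memℓp_Tfun C horth hiso 1 W
  have hmem2 : ∀ W : l2ZH d, Memℓp (Stmt18Aux.Tfun C (-1) W) 2 :=
    fun W => Stmt18Aux.memℓp_Tfun C horth hiso (-1) W
  have hTS : Stmt18Aux.TfunL C 1 hmem1 ∘ₗ Stmt18Aux.TfunL C (-1) hmem2 = LinearMap.id := by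
    apply LinearMap.ext; intro W
    apply lp.ext; funext x
    exact Stmt18Aux.Tfun_comp_eq C hCC0 hsum 1 (-1) (by ring) W (hmem2 W) x
  have hST : Stmt18Aux.TfunL C (-1) hmem2 ∘ₗ Stmt18Aux.TfunL C 1 hmem1 = LinearMap.id := by
    apply LinearMap.ext; intro W
    apply lp.ext; funext x
    exact Stmt18Aux.Tfun_comp_eq C hCC0 hsum (-1) 1 (by ring) W (hmem1 W) x
  refine ⟨⟨LinearEquiv.ofLinear (Stmt18Aux.TfunL C 1 hmem1) (Stmt18Aux.TfunL C (-1) hmem2)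
    hTS hST, fun W => ?_⟩, fun W x => ?_⟩
  · exact Stmt18Aux.norm_TfunL C horth hiso 1 hmem1 W
  · show (Stmt18Aux.TfunL C 1 hmem1 W) x = _
    rw [Stmt18Aux.TfunL_apply]
    exact Finset.sum_congr rfl fun v _ => by rw [one_smul]
end
end
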